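/- For every a > 0 and every t > 0, exp(1/(4a) − t/2 − √(1+4at)/(4a)) > e^{-t}. Hence for the nonlinear coherent states generated by N(u) = exp(u + a u²/2), whose mean photon number is n̄(u) = u(1+au) with inverse u(n̄) = (√(1+4a n̄) − 1)/(2a), the difference Δ(n̄) = 1/N(u(n̄)) − e^{-n̄} is strictly positive for all n̄ > 0, i.e. their Helstrom bound is strictly larger than the Glauber–Sudarshan one. -/

import Mathlib

/-- For every `a > 0` and `t > 0`,
`exp (1/(4a) − t/2 − √(1+4at)/(4a)) > e^{-t}`.  Hence for the nonlinear
coherent states generated by `N(u) = exp (u + a u²/2)`, with mean photon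
number `n̄(u) = u(1+au)` inverted by `u(n̄) = (√(1+4a n̄) − 1)/(2a)`, the
difference `Δ(n̄) = 1/N(u(n̄)) − e^{-n̄}` is strictly positive for `n̄ = t > 0`:
their Helstrom bound strictly exceeds the Glauber–Sudarshan one. -/
theorem hermiteCS_delta_pos (a t : ℝ) (ha : 0 < a) (ht : 0 < t) :
    Real.exp (-t) <
      Real.exp (1 / (4*a) - t / 2 - Real.sqrt (1 + 4*a*t) / (4*a)) ∧
    0 < (Real.exp ((Real.sqrt (1 + 4*a*t) - 1) / (2*a) +
          a * ((Real.sqrt (1 + 4*a*t) - 1) / (2*a)) ^ 2 / 2))⁻¹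
        - Real.exp (-t) := by
  set s := Real.sqrt (1 + 4*a*t) with hs
  have hnn : (0:ℝ) ≤ 1 + 4*a*t := by nlinarith
  have hsq : s ^ 2 = 1 + 4*a*t := by
    rw [hs, Real.sq_sqrt hnn]
  have hspos : 0 < s := Real.sqrt_pos.mpr (by nlinarith)
  have hslt : s < 1 + 2*a*t := by
    nlinarith [hsq, hspos, mul_pos ha ht, sq_nonneg (a*t)]
  have hmain : Real.exp (-t) <
      Real.exp (1 / (4*a) - t / 2 - s / (4*a)) := by
    apply Real.exp_lt_exp.mpr
    have hdiff : (1/(4*a) - t/2 - s/(4*a)) - (-t) = (1 + 2*a*t - s)/(4*a) := by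
      field_simp; ring
    have hpos : 0 < (1 + 2*a*t - s)/(4*a) := div_pos (by linarith) (by linarith)
    linarith
  refine ⟨hmain, ?_⟩
  have heq : (s - 1) / (2*a) + a * ((s - 1) / (2*a)) ^ 2 / 2
      = -(1 / (4*a) - t / 2 - s / (4*a)) := by
    field_simp
    linear_combination 4 * hsq
  rw [heq, ← Real.exp_neg, neg_neg]
  linarith
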